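/- Let K be a compact Hausdorff space and U ⊆ K a dense open subset. Then the Stone–Čech compactification βU of U is homeomorphic to K if and only if every bounded continuous function on U extends continuously to K; in particular, if K is extremally disconnected, then βU ≅ K and hence C(βU) ≅ C(K). -/
import Mathlib

open Function Set

/-- Fibers of the closure of the graph over points of `U` are singletons. -/
lemma graph_closure_fiber {K : Type*} [TopologicalSpace K] [T2Space K]
    (U : Set K) (hUopen : IsOpen U) (f : BoundedContinuousFunction U ℂ)
    {p : K × ℂ} (hp : p ∈ closure {q : K × ℂ | ∃ u : U, ((u : K), f u) = q})
    (hp1 : p.1 ∈ U) : p.2 = f ⟨p.1, hp1⟩ := by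
  set e : (↥U × ℂ) → K × ℂ := Prod.map Subtype.val id with he
  have hemb : Topology.IsEmbedding e :=
    Topology.IsEmbedding.subtypeVal.prodMap Topology.IsEmbedding.id
  set G : Set (↥U × ℂ) := {q | q.2 = f q.1} with hG
  have hGclosed : IsClosed G := isClosed_eq continuous_snd (f.continuous.comp continuous_fst)
  have himg : e '' G = {q : K × ℂ | ∃ u : U, ((u : K), f u) = q} := by
    ext q
    constructor
    · rintro ⟨⟨u, c⟩, hc, rfl⟩
      exact ⟨u, by simp [e, Prod.map, hc.symm]⟩
    · rintro ⟨u, rfl⟩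
      exact ⟨(u, f u), rfl, rfl⟩
  have hq : (⟨⟨p.1, hp1⟩, p.2⟩ : ↥U × ℂ) ∈ closure G := by
    rw [hemb.closure_eq_preimage_closure_image G, mem_preimage, himg]
    simpa [e, Prod.map] using hp
  rw [hGclosed.closure_eq] at hq
  exact hq

theorem stoneCech_of_dense_open_eq_iff_extension
    {K : Type*} [TopologicalSpace K] [CompactSpace K] [T2Space K]
    (U : Set K) (hUopen : IsOpen U) (hUdense : Dense U) :
    (IsHomeomorph (stoneCechExtend (continuous_subtype_val : Continuous ((↑) : U → K))) ↔
      ∀ f : BoundedContinuousFunction U ℂ, ∃ g : C(K, ℂ), ∀ x : U, g x = f x) ∧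
    (ExtremallyDisconnected K →
      IsHomeomorph (stoneCechExtend (continuous_subtype_val : Continuous ((↑) : U → K))) ∧
      Nonempty (C(StoneCech U, ℂ) ≃⋆ₐ[ℂ] C(K, ℂ))) := by
  set φ : StoneCech U → K :=
    stoneCechExtend (continuous_subtype_val : Continuous ((↑) : U → K)) with hφdef
  have hφc : Continuous φ := continuous_stoneCechExtend _
  have hunit : ∀ u : U, φ (stoneCechUnit u) = (u : K) := fun u =>
    congrFun (stoneCechExtend_extends continuous_subtype_val) u
  -- surjectivity of φ
  have hsurj : Surjective φ := by
    have hcl : IsClosed (Set.range φ) := (isCompact_range hφc).isClosed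
    have hUsub : U ⊆ Set.range φ := fun y hy => ⟨stoneCechUnit ⟨y, hy⟩, hunit ⟨y, hy⟩⟩
    intro x
    have : x ∈ closure (Set.range φ) := closure_mono hUsub (hUdense x)
    rwa [hcl.closure_eq] at this
  -- extension property implies injectivity
  have hinj : (∀ f : BoundedContinuousFunction U ℂ, ∃ g : C(K, ℂ), ∀ x : U, g x = f x) →
      Injective φ := by
    intro hext a b hab
    by_contra hne
    obtain ⟨h, h0, h1, -⟩ := exists_continuous_zero_one_of_isClosed
      (isClosed_singleton (x := a)) (isClosed_singleton (x := b))
      (by simpa [Set.disjoint_singleton] using hne)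
    have hf0c : Continuous fun u : U => ((h (stoneCechUnit u) : ℝ) : ℂ) :=
      Complex.continuous_ofReal.comp (h.continuous.comp continuous_stoneCechUnit)
    set f : BoundedContinuousFunction U ℂ :=
      BoundedContinuousFunction.ofNormedAddCommGroup _ hf0c ‖h‖ (by
        intro u
        simpa using h.norm_coe_le_norm (stoneCechUnit u)) with hfdef
    obtain ⟨g, hg⟩ := hext f
    have hgφ : (fun p : StoneCech U => ((h p : ℝ) : ℂ)) = g ∘ φ := by
      apply stoneCech_hom_ext (Complex.continuous_ofReal.comp h.continuous)
        (g.continuous.comp hφc)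
      funext u
      simp only [Function.comp_apply, hunit u]
      exact (hg u).symm
    have : ((h a : ℝ) : ℂ) = ((h b : ℝ) : ℂ) := by
      have ha := congrFun hgφ a
      have hb := congrFun hgφ b
      rw [ha, hb, Function.comp_apply, Function.comp_apply, hab]
    have hab' : h a = h b := by exact_mod_cast this
    rw [h0 rfl, h1 rfl] at hab'
    simpa using hab'
  -- homeomorphism implies extension property
  have hfwd : IsHomeomorph φ →
      ∀ f : BoundedContinuousFunction U ℂ, ∃ g : C(K, ℂ), ∀ x : U, g x = f x := by
    intro hh f
    obtain ⟨e, he⟩ := isHomeomorph_iff_exists_homeomorph.mp hh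
    haveI : CompactSpace (Metric.closedBall (0 : ℂ) ‖f‖) :=
      isCompact_iff_compactSpace.mp (isCompact_closedBall _ _)
    have hmem : ∀ u : U, f u ∈ Metric.closedBall (0 : ℂ) ‖f‖ := fun u => by
      simpa [Metric.mem_closedBall, dist_zero_right] using f.norm_coe_le_norm u
    have hf' : Continuous fun u : U => (⟨f u, hmem u⟩ : Metric.closedBall (0 : ℂ) ‖f‖) :=
      f.continuous.subtype_mk _
    set F : StoneCech U → Metric.closedBall (0 : ℂ) ‖f‖ := stoneCechExtend hf' with hF
    refine ⟨⟨fun x => (F (e.symm x) : ℂ),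
      continuous_subtype_val.comp ((continuous_stoneCechExtend hf').comp e.symm.continuous)⟩,
      fun u => ?_⟩
    have hsymm : e.symm (u : K) = stoneCechUnit u := by
      apply e.injective
      rw [Homeomorph.apply_symm_apply]
      rw [show e (stoneCechUnit u) = φ (stoneCechUnit u) from congrFun he _, hunit]
    have hext := congrFun (stoneCechExtend_extends hf') u
    simp only [Function.comp_apply] at hext
    simp only [ContinuousMap.coe_mk, hsymm, hF, hext]
  -- extremally disconnected implies extension property
  have hED : ExtremallyDisconnected K →
      ∀ f : BoundedContinuousFunction U ℂ, ∃ g : C(K, ℂ), ∀ x : U, g x = f x := by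
    intro hK f
    haveI := hK
    set S : Set (K × ℂ) := {q : K × ℂ | ∃ u : U, ((u : K), f u) = q} with hS
    have hSsub : S ⊆ (Set.univ : Set K) ×ˢ Metric.closedBall (0 : ℂ) ‖f‖ := by
      rintro q ⟨u, rfl⟩
      refine ⟨Set.mem_univ _, ?_⟩
      simpa [Metric.mem_closedBall, dist_zero_right] using f.norm_coe_le_norm u
    have hScomp : IsCompact (closure S) :=
      IsCompact.of_isClosed_subset
        (isCompact_univ.prod (isCompact_closedBall (0 : ℂ) ‖f‖)) isClosed_closure
        (closure_minimal hSsub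
          (isClosed_univ.prod Metric.isClosed_closedBall))
    haveI : CompactSpace (closure S) := isCompact_iff_compactSpace.mp hScomp
    set π : closure S → K := fun p => (p : K × ℂ).1 with hπ
    have hπc : Continuous π := continuous_fst.comp continuous_subtype_val
    have hπsurj : Surjective π := by
      have hcl : IsClosed (Set.range π) := (isCompact_range hπc).isClosed
      have hUsub : U ⊆ Set.range π := by
        intro y hy
        exact ⟨⟨((⟨y, hy⟩ : U), f ⟨y, hy⟩), subset_closure ⟨⟨y, hy⟩, rfl⟩⟩, rfl⟩
      intro x
      have : x ∈ closure (Set.range π) := closure_mono hUsub (hUdense x)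
      rwa [hcl.closure_eq] at this
    obtain ⟨s, hs_cont, hs⟩ := CompactT2.ExtremallyDisconnected.projective
      (continuous_id (X := K)) hπc hπsurj
    refine ⟨⟨fun x => ((s x : K × ℂ)).2,
      continuous_snd.comp (continuous_subtype_val.comp hs_cont)⟩, fun u => ?_⟩
    have hmem : ((s (u : K) : K × ℂ)) ∈ closure S := (s (u : K)).2
    have h1 : ((s (u : K) : K × ℂ)).1 = (u : K) := congrFun hs (u : K)
    have hmem1 : ((s (u : K) : K × ℂ)).1 ∈ U := by rw [h1]; exact u.2
    have := graph_closure_fiber U hUopen f hmem hmem1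
    simp only [ContinuousMap.coe_mk]
    rw [this]
    congr 1
    exact Subtype.ext h1
  constructor
  · constructor
    · exact hfwd
    · intro hext
      rw [isHomeomorph_iff_continuous_bijective]
      exact ⟨hφc, hinj hext, hsurj⟩
  · intro hK
    have hh : IsHomeomorph φ := by
      rw [isHomeomorph_iff_continuous_bijective]
      exact ⟨hφc, hinj (hED hK), hsurj⟩
    refine ⟨hh, ?_⟩
    obtain ⟨e, he⟩ := isHomeomorph_iff_exists_homeomorph.mp hh
    exact ⟨Homeomorph.compStarAlgEquiv' ℂ ℂ e.symm⟩
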